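/- The group isomorphism Isom(H) ≅ O(H) ⋉ H is a homeomorphism between the pointwise convergence topology on Isom(H) and the product of the strong operator topology on O(H) and the norm topology on H. -/

import Mathlib

/-- The group isomorphism `Isom(H) ≅ O(H) ⋉ H`, `(ρ, v) ↦ (x ↦ ρ x + v)`, is a
homeomorphism between the product of the strong operator topology on `O(H)` with the
norm topology on `H`, and the topology of pointwise convergence on `Isom(H)`. -/
theorem isom_hilbert_homeomorph_orthogonal_prod_translations
    {H : Type*} [NormedAddCommGroup H] [InnerProductSpace ℝ H] [CompleteSpace H]
    [TopologicalSpace.SeparableSpace H] :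
    letI : TopologicalSpace (H ≃ₗᵢ[ℝ] H) :=
      TopologicalSpace.induced (fun ρ : H ≃ₗᵢ[ℝ] H => (ρ : H → H)) Pi.topologicalSpace
    letI : TopologicalSpace (H ≃ᵢ H) :=
      TopologicalSpace.induced (fun f : H ≃ᵢ H => (f : H → H)) Pi.topologicalSpace
    ∃ e : (H ≃ₗᵢ[ℝ] H) × H ≃ₜ (H ≃ᵢ H),
      ∀ (ρ : H ≃ₗᵢ[ℝ] H) (v x : H), e (ρ, v) x = ρ x + v := by
  letI tO : TopologicalSpace (H ≃ₗᵢ[ℝ] H) :=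
    TopologicalSpace.induced (fun ρ : H ≃ₗᵢ[ℝ] H => (ρ : H → H)) Pi.topologicalSpace
  letI tI : TopologicalSpace (H ≃ᵢ H) :=
    TopologicalSpace.induced (fun f : H ≃ᵢ H => (f : H → H)) Pi.topologicalSpace
  have hevO : ∀ x : H, Continuous fun ρ : H ≃ₗᵢ[ℝ] H => ρ x := fun x =>
    (continuous_apply x).comp continuous_induced_dom
  have hevI : ∀ x : H, Continuous fun f : H ≃ᵢ H => f x := fun x =>
    (continuous_apply x).comp continuous_induced_dom
  refine ⟨{ toFun := fun p => p.1.toIsometryEquiv.trans (IsometryEquiv.addRight p.2)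
            invFun := fun f => (f.toRealLinearIsometryEquiv, f 0)
            left_inv := ?_
            right_inv := ?_
            continuous_toFun := ?_
            continuous_invFun := ?_ }, fun ρ v x => rfl⟩
  · rintro ⟨ρ, v⟩
    ext x
    · simp
    · simp
  · intro f
    ext x
    simp [IsometryEquiv.toRealLinearIsometryEquiv_apply]
  · apply continuous_induced_rng.2
    apply continuous_pi
    intro x
    exact ((hevO x).comp continuous_fst).add continuous_snd
  · apply Continuous.prodMk
    · apply continuous_induced_rng.2
      apply continuous_pi
      intro x
      simpa using (show Continuous fun f : H ≃ᵢ H => f x - f 0 from (hevI x).sub (hevI 0))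
    · exact hevI 0
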